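/- Let (E, τ, 𝓑, 𝓜) be a generic matroid, let B = {a₁,...,aₙ} ∈ 𝓑, and let M ∈ 𝓜. Then there exist x₁, ..., xₙ ∈ M such that for each 0 ≤ j ≤ n the set {x₁,...,x_j, a_{j+1},...,aₙ} is in 𝓑; in particular {x₁,...,xₙ} ∈ 𝓑_M, so one can pass from B to a basis of M in at most n exchange steps. -/

import Mathlib

/-- `Bs` is the collection of bases of a matroid (with finite bases):
nonempty, an antichain, and satisfying the basis exchange property. -/
def IsMatroidBases {E : Type*} [DecidableEq E] (Bs : Set (Finset E)) : Prop :=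
  Bs.Nonempty ∧
  (∀ B ∈ Bs, ∀ B' ∈ Bs, ¬ B ⊂ B') ∧
  (∀ B₁ ∈ Bs, ∀ B₂ ∈ Bs, ∀ a ∈ B₁, a ∉ B₂ →
    ∃ b ∈ B₂, b ∉ B₁ ∧ insert b (B₁.erase a) ∈ Bs)

/-- The bases of the generic matroid contained in a given set `M`. -/
def basesIn {E : Type*} (𝓑 : Set (Finset E)) (M : Set E) : Set (Finset E) :=
  {B ∈ 𝓑 | (B : Set E) ⊆ M}

/-- `C_M`: the union of all bases contained in `M`. -/
def basesUnion {E : Type*} (𝓑 : Set (Finset E)) (M : Set E) : Set E :=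
  ⋃ B ∈ basesIn 𝓑 M, (B : Set E)

/-- A generic matroid: a set `E` with a topology `τ`, a collection `𝓑` of
finite subsets, and a nonempty collection `𝓜` of subsets such that
(1) for each `M ∈ 𝓜` the bases contained in `M` form a matroid on `M`;
(2) every basis is contained in some `M ∈ 𝓜`;
(3) the generic exchange property holds. -/
def IsGenericMatroid (E : Type*) [DecidableEq E] (τ : TopologicalSpace E)
    (𝓑 : Set (Finset E)) (𝓜 : Set (Set E)) : Prop :=
  𝓜.Nonempty ∧
  (∀ M ∈ 𝓜, IsMatroidBases (basesIn 𝓑 M)) ∧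
  (∀ B ∈ 𝓑, ∃ M ∈ 𝓜, (B : Set E) ⊆ M) ∧
  (∀ B ∈ 𝓑, ∀ b ∈ B, ∀ M ∈ 𝓜, ∃ U : Set E, τ.IsOpen U ∧
    (U ∩ basesUnion 𝓑 M).Nonempty ∧
    ∀ x ∈ M, (x ∈ U ∩ basesUnion 𝓑 M ↔ insert x (B.erase b) ∈ 𝓑))

/-- From any basis `B = {a₁, …, aₙ}` of a generic matroid one can pass to a
basis of any `M ∈ 𝓜` in at most `n` exchange steps. -/
lemma basesUnion_subset {E : Type*} (𝓑 : Set (Finset E)) (M : Set E) :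
    basesUnion 𝓑 M ⊆ M := by
  intro x hx
  simp only [basesUnion, Set.mem_iUnion] at hx
  obtain ⟨B, hB, hxB⟩ := hx
  exact hB.2 hxB

theorem genericMatroid_stepwise_exchange (E : Type*) [DecidableEq E]
    (τ : TopologicalSpace E) (𝓑 : Set (Finset E)) (𝓜 : Set (Set E))
    (h : IsGenericMatroid E τ 𝓑 𝓜) (n : ℕ) (a : Fin n → E)
    (hinj : Function.Injective a) (B : Finset E)
    (hBa : B = Finset.image a Finset.univ) (hB : B ∈ 𝓑)
    (M : Set E) (hM : M ∈ 𝓜) :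
    ∃ x : Fin n → E, (∀ j, x j ∈ M) ∧
      ∀ j : ℕ, j ≤ n →
        Finset.image (fun i : Fin n => if (i : ℕ) < j then x i else a i)
          Finset.univ ∈ 𝓑 := by
  obtain ⟨-, hmat, -, hexch⟩ := h
  rcases Nat.eq_zero_or_pos n with hn | hn
  · subst hn
    refine ⟨fun i => i.elim0, fun i => i.elim0, ?_⟩
    intro j hj
    have hB0 : B = (∅ : Finset E) := by
      rw [hBa]; simp
    rw [Finset.univ_eq_empty, Finset.image_empty]
    exact hB0 ▸ hB
  · -- n > 0 : get an element of M
    have ha0 : a ⟨0, hn⟩ ∈ B := by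
      rw [hBa]; exact Finset.mem_image_of_mem a (Finset.mem_univ _)
    obtain ⟨U0, -, ⟨c0, hc0⟩, -⟩ := hexch B hB (a ⟨0, hn⟩) ha0 M hM
    have hc0M : c0 ∈ M := basesUnion_subset 𝓑 M hc0.2
    -- main claim by induction
    have key : ∀ j, j ≤ n → ∃ x : Fin n → E, (∀ i, x i ∈ M) ∧
        ∀ k, k ≤ j → Finset.image (fun i : Fin n => if (i : ℕ) < k then x i else a i)
          Finset.univ ∈ 𝓑 := by
      intro j
      induction j with
      | zero =>
        intro _
        refine ⟨fun _ => c0, fun _ => hc0M, ?_⟩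
        intro k hk
        interval_cases k
        have : (fun i : Fin n => if (i : ℕ) < 0 then c0 else a i) = a := by
          funext i; simp
        rw [this]
        exact hBa ▸ hB
      | succ j ih =>
        intro hj
        obtain ⟨x, hxM, hx⟩ := ih (Nat.le_of_succ_le hj)
        have hjn : j < n := hj
        set aj : E := a ⟨j, hjn⟩ with haj
        have hSj := hx j le_rfl
        set Sj := Finset.image (fun i : Fin n => if (i : ℕ) < j then x i else a i)
          Finset.univ with hSjdef
        by_cases hca : ∃ i : Fin n, (i : ℕ) < j ∧ x i = aj
        · -- degenerate case: a_j already appears among the chosen x's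
          obtain ⟨i0, hi0, hxi0⟩ := hca
          refine ⟨Function.update x ⟨j, hjn⟩ aj, ?_, ?_⟩
          · intro i
            rcases eq_or_ne i ⟨j, hjn⟩ with rfl | hne
            · rw [Function.update_self]; exact hxi0 ▸ hxM i0
            · rw [Function.update_of_ne hne]; exact hxM i
          · intro k hk
            rcases Nat.lt_or_ge k (j+1) with hk' | hk'
            · have hkj : k ≤ j := Nat.lt_succ_iff.mp hk'
              have : Finset.image (fun i : Fin n => if (i : ℕ) < k then
                  Function.update x ⟨j, hjn⟩ aj i else a i) Finset.univ
                  = Finset.image (fun i : Fin n => if (i : ℕ) < k then x i else a i)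
                  Finset.univ := by
                apply Finset.image_congr
                intro i _
                by_cases hik : (i : ℕ) < k
                · have hne : i ≠ ⟨j, hjn⟩ := by
                    intro hh; rw [hh] at hik; simp at hik; omega
                  simp [hik, Function.update_of_ne hne]
                · simp [hik]
              rw [this]
              exact hx k hkj
            · have hkeq : k = j + 1 := le_antisymm hk hk'
              subst hkeq
              have heq : Finset.image (fun i : Fin n => if (i : ℕ) < j + 1 then
                  Function.update x ⟨j, hjn⟩ aj i else a i) Finset.univ = Sj := by
                rw [hSjdef]
                ext e
                simp only [Finset.mem_image, Finset.mem_univ, true_and]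
                constructor
                · rintro ⟨i, rfl⟩
                  by_cases hij : (i : ℕ) < j
                  · have hne : i ≠ ⟨j, hjn⟩ := by intro hh; rw [hh] at hij; simp at hij
                    refine ⟨i, ?_⟩
                    simp [hij, Nat.lt_succ_of_lt hij, Function.update_of_ne hne]
                  · rcases eq_or_ne i ⟨j, hjn⟩ with rfl | hne
                    · refine ⟨i0, ?_⟩
                      simp [hi0, hxi0, Function.update_self]
                    · have hij' : ¬ (i : ℕ) < j + 1 := by
                        have : (i : ℕ) ≠ j := fun hh => hne (Fin.ext hh)
                        omega
                      refine ⟨i, ?_⟩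
                      simp [hij, hij']
                · rintro ⟨i, rfl⟩
                  by_cases hij : (i : ℕ) < j
                  · have hne : i ≠ ⟨j, hjn⟩ := by intro hh; rw [hh] at hij; simp at hij
                    refine ⟨i, ?_⟩
                    simp [hij, Nat.lt_succ_of_lt hij, Function.update_of_ne hne]
                  · rcases eq_or_ne i ⟨j, hjn⟩ with rfl | hne
                    · refine ⟨⟨j, hjn⟩, ?_⟩
                      simp [hij, Function.update_self, haj]
                    · have hij' : ¬ (i : ℕ) < j + 1 := by
                        have : (i : ℕ) ≠ j := fun hh => hne (Fin.ext hh)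
                        omega
                      refine ⟨i, ?_⟩
                      simp [hij, hij']
              rw [heq]
              exact hSj
        · -- generic exchange case
          push_neg at hca
          have hajSj : aj ∈ Sj := by
            rw [hSjdef]
            simp only [Finset.mem_image, Finset.mem_univ, true_and]
            exact ⟨⟨j, hjn⟩, by simp [haj]⟩
          obtain ⟨U, -, ⟨c, hc⟩, hiff⟩ := hexch Sj hSj aj hajSj M hM
          have hcM : c ∈ M := basesUnion_subset 𝓑 M hc.2
          have hcB : insert c (Sj.erase aj) ∈ 𝓑 := (hiff c hcM).mp hc
          refine ⟨Function.update x ⟨j, hjn⟩ c, ?_, ?_⟩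
          · intro i
            rcases eq_or_ne i ⟨j, hjn⟩ with rfl | hne
            · rw [Function.update_self]; exact hcM
            · rw [Function.update_of_ne hne]; exact hxM i
          · intro k hk
            rcases Nat.lt_or_ge k (j+1) with hk' | hk'
            · have hkj : k ≤ j := Nat.lt_succ_iff.mp hk'
              have : Finset.image (fun i : Fin n => if (i : ℕ) < k then
                  Function.update x ⟨j, hjn⟩ c i else a i) Finset.univ
                  = Finset.image (fun i : Fin n => if (i : ℕ) < k then x i else a i)
                  Finset.univ := by
                apply Finset.image_congr
                intro i _
                by_cases hik : (i : ℕ) < k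
                · have hne : i ≠ ⟨j, hjn⟩ := by
                    intro hh; rw [hh] at hik; simp at hik; omega
                  simp [hik, Function.update_of_ne hne]
                · simp [hik]
              rw [this]
              exact hx k hkj
            · have hkeq : k = j + 1 := le_antisymm hk hk'
              subst hkeq
              have heq : Finset.image (fun i : Fin n => if (i : ℕ) < j + 1 then
                  Function.update x ⟨j, hjn⟩ c i else a i) Finset.univ
                  = insert c (Sj.erase aj) := by
                rw [hSjdef]
                ext e
                simp only [Finset.mem_image, Finset.mem_univ, true_and,
                  Finset.mem_insert, Finset.mem_erase]
                constructor
                · rintro ⟨i, rfl⟩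
                  by_cases hij : (i : ℕ) < j
                  · have hne : i ≠ ⟨j, hjn⟩ := by intro hh; rw [hh] at hij; simp at hij
                    right
                    constructor
                    · simp only [Nat.lt_succ_of_lt hij, if_pos,
                        Function.update_of_ne hne]
                      simpa [Nat.lt_succ_of_lt hij, Function.update_of_ne hne]
                        using hca i hij
                    · exact ⟨i, by simp [hij, Nat.lt_succ_of_lt hij,
                        Function.update_of_ne hne]⟩
                  · rcases eq_or_ne i ⟨j, hjn⟩ with rfl | hne
                    · left; simp [Function.update_self]
                    · have hij' : ¬ (i : ℕ) < j + 1 := by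
                        have : (i : ℕ) ≠ j := fun hh => hne (Fin.ext hh)
                        omega
                      right
                      refine ⟨?_, ⟨i, by simp [hij, hij']⟩⟩
                      simp only [hij', if_neg, not_false_iff]
                      have : a i ≠ aj := by
                        rw [haj]; exact fun hh => hne (hinj hh)
                      simpa [hij'] using this
                · rintro (rfl | ⟨hne0, i, rfl⟩)
                  · exact ⟨⟨j, hjn⟩, by simp [Function.update_self]⟩
                  · by_cases hij : (i : ℕ) < j
                    · have hne : i ≠ ⟨j, hjn⟩ := by intro hh; rw [hh] at hij; simp at hij
                      exact ⟨i, by simp [hij, Nat.lt_succ_of_lt hij,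
                        Function.update_of_ne hne]⟩
                    · have hne : i ≠ ⟨j, hjn⟩ := by
                        intro hh
                        apply hne0
                        simp [hij, hh, haj]
                      have hij' : ¬ (i : ℕ) < j + 1 := by
                        have : (i : ℕ) ≠ j := fun hh => hne (Fin.ext hh)
                        omega
                      exact ⟨i, by simp [hij, hij']⟩
              rw [heq]
              exact hcB
    obtain ⟨x, hxM, hx⟩ := key n le_rfl
    exact ⟨x, hxM, fun j hj => hx j hj⟩
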